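/- Let R be a commutative topological ring which is Hausdorff, and suppose there exists a nonzero zerodivisor x ∈ R (i.e., x ≠ 0 and there exists b ≠ 0 with xb = 0) such that the map f : R → R given by r ↦ rx is a closed map. If the set Z(R) of zerodivisors of R is a compact subset of R, then R is compact. -/

import Mathlib

/-- Let `R` be a Hausdorff commutative topological ring, and suppose there
is a nonzero zerodivisor `x` such that `r ↦ r * x` is a closed map. If the set of
zerodivisors of `R` is compact, then `R` is compact. -/
theorem stmt16 (R : Type*) [CommRing R] [TopologicalSpace R] [IsTopologicalRing R]
    [T2Space R] (x : R) (hx : x ≠ 0) (hxzd : ∃ b : R, b ≠ 0 ∧ x * b = 0)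
    (hclosed : IsClosedMap fun r : R => r * x)
    (hZ : IsCompact {a : R | ∃ b : R, b ≠ 0 ∧ a * b = 0}) :
    CompactSpace R := by
  obtain ⟨b, hb, hxb⟩ := hxzd
  set f : R → R := fun r => r * x with hf
  have hcont : Continuous f := continuous_id.mul continuous_const
  -- the annihilator of x is compact
  have hAnnSub : {r : R | r * x = 0} ⊆ {a : R | ∃ b : R, b ≠ 0 ∧ a * b = 0} := by
    intro r hr
    rcases eq_or_ne r 0 with rfl | hr0
    · exact ⟨b, hb, by simp⟩
    · exact ⟨x, hx, hr⟩
  have hAnnClosed : IsClosed {r : R | r * x = 0} :=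
    isClosed_singleton.preimage hcont
  have hAnn : IsCompact {r : R | r * x = 0} :=
    hZ.of_isClosed_subset hAnnClosed hAnnSub
  -- f is proper: closed with compact fibers
  have hproper : IsProperMap f := by
    rw [isProperMap_iff_isClosedMap_and_compact_fibers]
    refine ⟨hcont, hclosed, fun y => ?_⟩
    rcases Set.eq_empty_or_nonempty (f ⁻¹' {y}) with h | ⟨r0, hr0⟩
    · simp only [h]; exact isCompact_empty
    · have himg : f ⁻¹' {y} = (fun a => r0 + a) '' {r : R | r * x = 0} := by
        ext r
        simp only [Set.mem_preimage, Set.mem_singleton_iff, Set.mem_image, Set.mem_setOf_eq]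
        constructor
        · intro hr
          refine ⟨r - r0, ?_, by ring⟩
          have : r0 * x = y := hr0
          have hr' : r * x = y := hr
          rw [sub_mul, this, hr', sub_self]
        · rintro ⟨a, ha, rfl⟩
          have : r0 * x = y := hr0
          simp only [f]
          rw [add_mul, ha, this, add_zero]
      rw [himg]
      exact hAnn.image (continuous_const.add continuous_id)
  -- image of f is compact
  have himgsub : f '' Set.univ ⊆ {a : R | ∃ b : R, b ≠ 0 ∧ a * b = 0} := by
    rintro _ ⟨r, -, rfl⟩
    exact ⟨b, hb, by rw [mul_assoc, hxb, mul_zero]⟩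
  have himgclosed : IsClosed (f '' Set.univ) := hclosed _ isClosed_univ
  have himgcpt : IsCompact (f '' Set.univ) :=
    hZ.of_isClosed_subset himgclosed himgsub
  have : IsCompact (Set.univ : Set R) := by
    have := hproper.isCompact_preimage himgcpt
    have hsub : (Set.univ : Set R) ⊆ f ⁻¹' (f '' Set.univ) :=
      fun r _ => Set.mem_image_of_mem f (Set.mem_univ r)
    exact this.of_isClosed_subset isClosed_univ hsub
  exact isCompact_univ_iff.mp this
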